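/- (Discrete harmonicity of the type C Weyl dimension polynomial.) Fix d ≥ 1 and define the polynomial function H : ℝ^d → ℝ by H(x) = ∏_{i=1}^d x_i · ∏_{1≤i<j≤d} (x_i² − x_j²). Then for every x ∈ ℝ^d, ∑_{i=1}^d ( H(x + e_i) + H(x − e_i) ) = 2d · H(x). Consequently, since H vanishes whenever some coordinate is 0 or two coordinates are equal in absolute value, the kernel p⁺(λ, Λ) = (1/(2d)) H(Λ + ρ)/H(λ + ρ), with ρ = (d, d−1, …, 1) and Λ ranging over the dominant weights Λ ∈ ℤ^d with Λ₁ ≥ ⋯ ≥ Λ_d ≥ 0 and Λ − λ ∈ {±e_1,…,±e_d}, is a stochastic matrix on the dominant weights of ℤ^d. -/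

import Mathlib

/-- The type-`C` Weyl polynomial `H(x) = ∏_i x_i · ∏_{i<j} (x_i² - x_j²)`. -/
noncomputable def HC (d : ℕ) (x : Fin d → ℝ) : ℝ :=
  (∏ i, x i) * ∏ i, ∏ j ∈ Finset.Ioi i, ((x i) ^ 2 - (x j) ^ 2)

/-- A weight `λ ∈ ℤ^d` is dominant if `λ₁ ≥ ⋯ ≥ λ_d ≥ 0`. -/
def DomC (d : ℕ) (μ : Fin d → ℤ) : Prop :=
  (∀ i j : Fin d, i ≤ j → μ j ≤ μ i) ∧ ∀ i, 0 ≤ μ i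

open Classical in
/-- The conditioned kernel `p⁺(λ,Λ) = (1/(2d))·H(Λ+ρ)/H(λ+ρ)` with `ρ = (d,d-1,…,1)`,
for `Λ` dominant with `Λ - λ ∈ {±e_1,…,±e_d}`, and `0` otherwise. -/
noncomputable def pPlusC (d : ℕ) (lam Lam : Fin d → ℤ) : ℝ :=
  if DomC d Lam ∧ (∃ i, Lam = lam + Pi.single i 1 ∨ Lam = lam - Pi.single i 1) then
    (1 / (2 * (d : ℝ)))
      * HC d (fun i => ((Lam i + ((d : ℤ) - ((i : ℕ) : ℤ)) : ℤ) : ℝ))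
      / HC d (fun i => ((lam i + ((d : ℤ) - ((i : ℕ) : ℤ)) : ℤ) : ℝ))
  else 0

namespace Stmt15
open Finset Matrix

/-! ### Part 1: discrete harmonicity via a determinantal representation -/

/-- matrix with entries `x_j^{2i+1}` -/
def Mmat (d : ℕ) (x : Fin d → ℝ) : Matrix (Fin d) (Fin d) ℝ :=
  Matrix.of fun i j => x j ^ (2 * (i : ℕ) + 1)

lemma HC_eq_det (d : ℕ) (x : Fin d → ℝ) :
    HC d x = (∏ i : Fin d, ∏ _j ∈ Finset.Ioi i, (-1 : ℝ)) * (Mmat d x).det := by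
  have h1 : Mmat d x = Matrix.of fun i j => x j * ((Matrix.vandermonde (fun k => x k ^ 2))ᵀ i j) := by
    ext i j
    simp only [Mmat, Matrix.of_apply, Matrix.transpose_apply, Matrix.vandermonde_apply]
    rw [pow_add, pow_mul, pow_one, mul_comm]
  rw [h1, Matrix.det_mul_row, Matrix.det_transpose, Matrix.det_vandermonde]
  unfold HC
  rw [← mul_assoc, mul_comm (∏ i : Fin d, ∏ _j ∈ Finset.Ioi i, (-1:ℝ)), mul_assoc]
  congr 1
  rw [← Finset.prod_mul_distrib]
  refine Finset.prod_congr rfl fun i _ => ?_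
  rw [← Finset.prod_mul_distrib]
  refine Finset.prod_congr rfl fun j _ => ?_
  ring

lemma sum_det_updateColumn (d : ℕ) (A C : Matrix (Fin d) (Fin d) ℝ) :
    ∑ i, (A.updateCol i (fun r => (C * A) r i)).det = C.trace * A.det := by
  have h : ∀ i : Fin d, (A.updateCol i (fun r => (C * A) r i)).det
      = (A.adjugate * (C * A)) i i := by
    intro i
    rw [← Matrix.cramer_apply, Matrix.cramer_eq_adjugate_mulVec]
    simp [Matrix.mulVec, Matrix.mul_apply, dotProduct]
  simp only [h]
  have : ∑ i, (A.adjugate * (C * A)) i i = ((C * A) * A.adjugate).trace := by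
    rw [← Matrix.trace_mul_comm]; rfl
  rw [this, mul_assoc, Matrix.mul_adjugate, Matrix.mul_smul, Matrix.mul_one,
    Matrix.trace_smul, smul_eq_mul, mul_comm]

lemma binom_odd (r : ℕ) (t : ℝ) :
    (t + 1) ^ (2 * r + 1) + (t - 1) ^ (2 * r + 1)
      = ∑ s ∈ Finset.range (r + 1), 2 * ((2 * r + 1).choose (2 * s + 1)) * t ^ (2 * s + 1) := by
  have h1 := add_pow t 1 (2 * r + 1)
  have h2 := add_pow t (-1 : ℝ) (2 * r + 1)
  have hst : t - 1 = t + (-1 : ℝ) := by ring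
  rw [hst, h1, h2, ← Finset.sum_add_distrib]
  have hfil : ∑ k ∈ Finset.range (2 * r + 1 + 1),
      (t ^ k * 1 ^ (2 * r + 1 - k) * ((2 * r + 1).choose k : ℝ)
        + t ^ k * (-1 : ℝ) ^ (2 * r + 1 - k) * ((2 * r + 1).choose k : ℝ))
      = ∑ k ∈ (Finset.range (2 * r + 1 + 1)).filter (fun k => Odd k),
      (t ^ k * 1 ^ (2 * r + 1 - k) * ((2 * r + 1).choose k : ℝ)
        + t ^ k * (-1 : ℝ) ^ (2 * r + 1 - k) * ((2 * r + 1).choose k : ℝ)) := by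
    refine (Finset.sum_filter_of_ne ?_).symm
    intro k hk hne
    by_contra hodd
    have hkev : k % 2 = 0 := by
      rcases Nat.even_or_odd k with h | h
      · exact Nat.even_iff.mp h
      · exact absurd h hodd
    have : Odd (2 * r + 1 - k) := by
      rw [Nat.odd_iff]
      have := Finset.mem_range.mp hk
      omega
    apply hne
    rw [this.neg_one_pow, one_pow]
    ring
  rw [hfil]
  have himg : (Finset.range (2 * r + 1 + 1)).filter (fun k => Odd k)
      = (Finset.range (r + 1)).image (fun s => 2 * s + 1) := by
    ext k
    simp only [Finset.mem_filter, Finset.mem_range, Finset.mem_image, Nat.odd_iff]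
    constructor
    · rintro ⟨h1, h2⟩; exact ⟨k / 2, by omega, by omega⟩
    · rintro ⟨s, hs, rfl⟩; omega
  rw [himg, Finset.sum_image (by intro a _ b _ h; simp only at h; omega)]
  refine Finset.sum_congr rfl fun s hs => ?_
  have hev : Even (2 * r + 1 - (2 * s + 1)) := by
    rw [Nat.even_iff]
    have := Finset.mem_range.mp hs
    omega
  rw [hev.neg_one_pow, one_pow]
  ring

def Cmat (d : ℕ) : Matrix (Fin d) (Fin d) ℝ :=
  Matrix.of fun r s => if (s : ℕ) ≤ (r : ℕ) then
    2 * (((2 * (r : ℕ) + 1).choose (2 * (s : ℕ) + 1)) : ℝ) else 0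

lemma trace_Cmat (d : ℕ) : (Cmat d).trace = 2 * d := by
  unfold Matrix.trace Cmat
  simp [Matrix.diag, Nat.choose_self, Finset.sum_const, Finset.card_univ]
  ring

lemma Cmat_mulVec (d : ℕ) (r : Fin d) (t : ℝ) :
    (t + 1) ^ (2 * (r : ℕ) + 1) + (t - 1) ^ (2 * (r : ℕ) + 1)
      = ∑ s : Fin d, Cmat d r s * t ^ (2 * (s : ℕ) + 1) := by
  rw [binom_odd]
  set g : ℕ → ℝ := fun k => if k ≤ (r : ℕ) then
    2 * (((2 * (r : ℕ) + 1).choose (2 * k + 1)) : ℝ) * t ^ (2 * k + 1) else 0 with hg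
  have h1 : ∀ s : Fin d, Cmat d r s * t ^ (2 * (s : ℕ) + 1) = g (s : ℕ) := by
    intro s
    simp only [Cmat, Matrix.of_apply, hg]
    split_ifs <;> ring
  simp only [h1]
  rw [Fin.sum_univ_eq_sum_range g d]
  rw [← Finset.sum_subset (Finset.range_subset_range.mpr (by omega : (r : ℕ) + 1 ≤ d))
    (fun k _ hk => by simp only [hg]; rw [if_neg (by simp at hk; omega)])]
  refine Finset.sum_congr rfl fun k hk => ?_
  simp only [hg]
  rw [if_pos (by simp at hk; omega)]

lemma Mmat_shift (d : ℕ) (x : Fin d → ℝ) (i : Fin d) (c : ℝ) :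
    Mmat d (x + Pi.single i c) = (Mmat d x).updateCol i
      (fun r => (x i + c) ^ (2 * (r : ℕ) + 1)) := by
  ext r j
  rw [Matrix.updateCol_apply]
  simp only [Mmat, Matrix.of_apply, Pi.add_apply, Pi.single_apply]
  split_ifs with h
  · subst h; simp
  · simp [h]

lemma Mmat_shift_neg (d : ℕ) (x : Fin d → ℝ) (i : Fin d) :
    Mmat d (x - Pi.single i 1) = (Mmat d x).updateCol i
      (fun r => (x i - 1) ^ (2 * (r : ℕ) + 1)) := by
  have h : x - Pi.single i 1 = x + Pi.single i (-1 : ℝ) := by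
    ext k; by_cases h : k = i <;> (simp [Pi.single_apply, h]; try ring)
  rw [h, Mmat_shift]
  congr 1

lemma det_harm (d : ℕ) (x : Fin d → ℝ) :
    ∑ i : Fin d, ((Mmat d (x + Pi.single i 1)).det + (Mmat d (x - Pi.single i 1)).det)
      = 2 * (d : ℝ) * (Mmat d x).det := by
  have key : ∀ i : Fin d,
      (Mmat d (x + Pi.single i 1)).det + (Mmat d (x - Pi.single i 1)).det
        = ((Mmat d x).updateCol i (fun r => ((Cmat d) * (Mmat d x)) r i)).det := by
    intro i
    rw [Mmat_shift d x i 1, Mmat_shift_neg, ← Matrix.det_updateCol_add]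
    have hcol : ((fun r : Fin d => (x i + 1) ^ (2 * (r : ℕ) + 1))
          + fun r : Fin d => (x i - 1) ^ (2 * (r : ℕ) + 1))
        = fun r => (Cmat d * Mmat d x) r i := by
      funext r
      show (x i + 1) ^ (2 * (r : ℕ) + 1) + (x i - 1) ^ (2 * (r : ℕ) + 1) = _
      rw [Cmat_mulVec d r (x i)]
      simp only [Matrix.mul_apply, Mmat, Matrix.of_apply]
    rw [hcol]
  rw [Finset.sum_congr rfl fun i _ => key i, sum_det_updateColumn, trace_Cmat]

lemma HC_harm (d : ℕ) (x : Fin d → ℝ) :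
    ∑ i : Fin d, (HC d (x + Pi.single i 1) + HC d (x - Pi.single i 1))
      = 2 * (d : ℝ) * HC d x := by
  have h := det_harm d x
  simp only [HC_eq_det]
  calc ∑ i : Fin d, ((∏ i : Fin d, ∏ _j ∈ Ioi i, (-1:ℝ)) * (Mmat d (x + Pi.single i 1)).det
        + (∏ i : Fin d, ∏ _j ∈ Ioi i, (-1:ℝ)) * (Mmat d (x - Pi.single i 1)).det)
      = (∏ i : Fin d, ∏ _j ∈ Ioi i, (-1:ℝ)) * ∑ i : Fin d,
          ((Mmat d (x + Pi.single i 1)).det + (Mmat d (x - Pi.single i 1)).det) := by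
        rw [Finset.mul_sum]
        exact Finset.sum_congr rfl fun i _ => (mul_add _ _ _).symm
    _ = (∏ i : Fin d, ∏ _j ∈ Ioi i, (-1:ℝ)) * (2 * (d : ℝ) * (Mmat d x).det) := by rw [h]
    _ = 2 * (d : ℝ) * ((∏ i : Fin d, ∏ _j ∈ Ioi i, (-1:ℝ)) * (Mmat d x).det) := by ring

/-! ### Part 2: positivity and vanishing -/

lemma HC_pos (d : ℕ) (x : Fin d → ℝ) (h0 : ∀ i, 0 < x i)
    (hm : ∀ i j : Fin d, i < j → x j < x i) : 0 < HC d x := by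
  unfold HC
  apply mul_pos
  · exact Finset.prod_pos fun i _ => h0 i
  · refine Finset.prod_pos fun i _ => Finset.prod_pos fun j hj => ?_
    have hij : i < j := Finset.mem_Ioi.mp hj
    have : x j ^ 2 < x i ^ 2 :=
      pow_lt_pow_left₀ (hm i j hij) (le_of_lt (h0 j)) (by norm_num)
    linarith

lemma HC_zero_of_coord (d : ℕ) (x : Fin d → ℝ) (i : Fin d) (h : x i = 0) : HC d x = 0 := by
  unfold HC
  exact mul_eq_zero.mpr (Or.inl (Finset.prod_eq_zero (Finset.mem_univ i) h))

lemma HC_zero_of_eq (d : ℕ) (x : Fin d → ℝ) (i j : Fin d) (hij : i ≠ j) (h : x i = x j) :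
    HC d x = 0 := by
  unfold HC
  rcases lt_or_gt_of_ne hij with hlt | hgt
  · have hz : (∏ k ∈ Finset.Ioi i, (x i ^ 2 - x k ^ 2)) = 0 :=
      Finset.prod_eq_zero (Finset.mem_Ioi.mpr hlt)
        (show x i ^ 2 - x j ^ 2 = 0 by rw [h]; ring)
    exact mul_eq_zero.mpr (Or.inr (Finset.prod_eq_zero (Finset.mem_univ i) hz))
  · have hz : (∏ k ∈ Finset.Ioi j, (x j ^ 2 - x k ^ 2)) = 0 :=
      Finset.prod_eq_zero (Finset.mem_Ioi.mpr hgt)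
        (show x j ^ 2 - x i ^ 2 = 0 by rw [h]; ring)
    exact mul_eq_zero.mpr (Or.inr (Finset.prod_eq_zero (Finset.mem_univ j) hz))

/-- integer coordinates of `μ + ρ` -/
def wt (d : ℕ) (μ : Fin d → ℤ) (k : Fin d) : ℤ := μ k + ((d : ℤ) - ((k : ℕ) : ℤ))

lemma HC_wt_pos (d : ℕ) (μ : Fin d → ℤ) (hμ : DomC d μ) :
    0 < HC d (fun k => ((wt d μ k : ℤ) : ℝ)) := by
  apply HC_pos
  · intro k
    have h1 := hμ.2 k
    have h2 := k.isLt
    have : (0 : ℤ) < wt d μ k := by unfold wt; omega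
    exact_mod_cast this
  · intro k l hkl
    have h1 := hμ.1 k l (le_of_lt hkl)
    have h2 : (k : ℕ) < (l : ℕ) := hkl
    have : wt d μ l < wt d μ k := by unfold wt; omega
    exact_mod_cast this

lemma vanish_plus_pair (d : ℕ) (lam : Fin d → ℤ) (hlam : DomC d lam) (i : Fin d)
    (hD : ¬ DomC d (lam + Pi.single i 1)) :
    ∃ k l : Fin d, k ≠ l ∧ wt d (lam + Pi.single i 1) k = wt d (lam + Pi.single i 1) l := by
  set Λ := lam + Pi.single i 1 with hΛ
  have hval : ∀ k, Λ k = lam k + (if k = i then 1 else 0) := by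
    intro k; simp [hΛ, Pi.single_apply]
  have hB : ∀ k, 0 ≤ Λ k := by
    intro k; rw [hval]; have := hlam.2 k; split_ifs <;> omega
  have hA : ¬ (∀ i' j' : Fin d, i' ≤ j' → Λ j' ≤ Λ i') := fun hA => hD ⟨hA, hB⟩
  push_neg at hA
  obtain ⟨i', j', hle, hgt⟩ := hA
  have hji : j' = i := by
    by_contra hne
    have h1 : Λ j' = lam j' := by rw [hval, if_neg hne]; ring
    have h2 : lam i' ≤ Λ i' := by rw [hval]; split_ifs <;> omega
    have := hlam.1 i' j' hle
    omega
  subst hji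
  have hii : i' ≠ j' := by rintro rfl; omega
  have hlt : (i' : ℕ) < (j' : ℕ) := lt_of_le_of_ne (Fin.le_def.mp hle) fun h => hii (Fin.ext h)
  have heq : lam i' = lam j' := by
    have h1 : Λ i' = lam i' := by rw [hval, if_neg hii]; ring
    have h2 : Λ j' = lam j' + 1 := by rw [hval, if_pos rfl]
    have := hlam.1 i' j' hle
    omega
  obtain ⟨k, hkval⟩ : ∃ k : Fin d, (k : ℕ) = (j' : ℕ) - 1 := ⟨⟨(j' : ℕ) - 1, by omega⟩, rfl⟩
  have hkj : k ≠ j' := by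
    intro h; rw [h] at hkval; omega
  have hlamk : lam k = lam j' := by
    have h1 : lam k ≤ lam i' := hlam.1 i' k (Fin.le_def.mpr (by omega))
    have h2 : lam j' ≤ lam k := hlam.1 k j' (Fin.le_def.mpr (by omega))
    omega
  refine ⟨k, j', hkj, ?_⟩
  have hkvalz : ((k : ℕ) : ℤ) = ((j' : ℕ) : ℤ) - 1 := by omega
  have h1 : Λ k = lam j' := by rw [hval, if_neg hkj, hlamk]; ring
  have h2 : Λ j' = lam j' + 1 := by rw [hval, if_pos rfl]
  unfold wt
  rw [h1, h2, hkvalz]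
  ring

lemma vanish_minus_cases (d : ℕ) (lam : Fin d → ℤ) (hlam : DomC d lam) (i : Fin d)
    (hD : ¬ DomC d (lam - Pi.single i 1)) :
    (∃ k : Fin d, wt d (lam - Pi.single i 1) k = 0) ∨
    (∃ k l : Fin d, k ≠ l ∧ wt d (lam - Pi.single i 1) k = wt d (lam - Pi.single i 1) l) := by
  set Λ := lam - Pi.single i 1 with hΛ
  have hval : ∀ k, Λ k = lam k - (if k = i then 1 else 0) := by
    intro k; simp [hΛ, Pi.single_apply]
  by_cases hB : ∀ k, 0 ≤ Λ k
  · right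
    have hA : ¬ (∀ i' j' : Fin d, i' ≤ j' → Λ j' ≤ Λ i') := fun hA => hD ⟨hA, hB⟩
    push_neg at hA
    obtain ⟨i', j', hle, hgt⟩ := hA
    have hii : i' = i := by
      by_contra hne
      have h1 : Λ i' = lam i' := by rw [hval, if_neg hne]; ring
      have h2 : Λ j' ≤ lam j' := by rw [hval]; split_ifs <;> omega
      have := hlam.1 i' j' hle
      omega
    subst hii
    have hji : j' ≠ i' := by rintro rfl; omega
    have hlt : (i' : ℕ) < (j' : ℕ) := lt_of_le_of_ne (Fin.le_def.mp hle) fun h => hji (Fin.ext h.symm)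
    have heq : lam j' = lam i' := by
      have h1 : Λ i' = lam i' - 1 := by rw [hval, if_pos rfl]
      have h2 : Λ j' = lam j' := by rw [hval, if_neg hji]; ring
      have := hlam.1 i' j' hle
      omega
    obtain ⟨k, hkval⟩ : ∃ k : Fin d, (k : ℕ) = (i' : ℕ) + 1 :=
      ⟨⟨(i' : ℕ) + 1, by omega⟩, rfl⟩
    have hki : k ≠ i' := by intro h; rw [h] at hkval; omega
    have hlamk : lam k = lam i' := by
      have h1 : lam j' ≤ lam k := hlam.1 k j' (Fin.le_def.mpr (by omega))
      have h2 : lam k ≤ lam i' := hlam.1 i' k (Fin.le_def.mpr (by omega))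
      omega
    refine ⟨i', k, fun h => hki h.symm, ?_⟩
    have hkvalz : ((k : ℕ) : ℤ) = ((i' : ℕ) : ℤ) + 1 := by omega
    have h1 : Λ i' = lam i' - 1 := by rw [hval, if_pos rfl]
    have h2 : Λ k = lam i' := by rw [hval, if_neg hki, hlamk]; ring
    unfold wt
    rw [h1, h2, hkvalz]
    ring
  · push_neg at hB
    obtain ⟨k, hk⟩ := hB
    have hki : k = i := by
      by_contra hne
      rw [hval, if_neg hne] at hk
      have := hlam.2 k
      omega
    subst hki
    have hlk : lam k = 0 := by
      rw [hval, if_pos rfl] at hk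
      have := hlam.2 k
      omega
    by_cases hlast : (k : ℕ) + 1 = d
    · left
      refine ⟨k, ?_⟩
      unfold wt
      rw [hval, if_pos rfl, hlk]
      omega
    · right
      obtain ⟨k', hk'val⟩ : ∃ k' : Fin d, (k' : ℕ) = (k : ℕ) + 1 :=
        ⟨⟨(k : ℕ) + 1, by omega⟩, rfl⟩
      have hkk : k ≠ k' := by intro h; rw [← h] at hk'val; omega
      have hlamk' : lam k' = 0 := by
        have h1 : lam k' ≤ lam k := hlam.1 k k' (Fin.le_def.mpr (by omega))
        have h2 := hlam.2 k'
        omega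
      refine ⟨k, k', hkk, ?_⟩
      unfold wt
      rw [hval k, hval k', if_pos rfl, if_neg (fun h => hkk h.symm), hlk, hlamk']
      omega

/-! ### casting the shifted weights -/

lemma cast_wt_add (d : ℕ) (lam : Fin d → ℤ) (i : Fin d) :
    (fun k : Fin d => ((((lam + Pi.single i (1:ℤ)) : Fin d → ℤ) k + ((d : ℤ) - ((k : ℕ) : ℤ)) : ℤ) : ℝ))
      = (fun k : Fin d => ((lam k + ((d : ℤ) - ((k : ℕ) : ℤ)) : ℤ) : ℝ)) + Pi.single i 1 := by
  funext k
  by_cases h : k = i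
  · subst h
    simp only [Pi.add_apply, Pi.single_eq_same]
    push_cast
    ring
  · simp only [Pi.add_apply, Pi.single_apply, if_neg h]
    push_cast
    ring

lemma cast_wt_sub (d : ℕ) (lam : Fin d → ℤ) (i : Fin d) :
    (fun k : Fin d => ((((lam - Pi.single i (1:ℤ)) : Fin d → ℤ) k + ((d : ℤ) - ((k : ℕ) : ℤ)) : ℤ) : ℝ))
      = (fun k : Fin d => ((lam k + ((d : ℤ) - ((k : ℕ) : ℤ)) : ℤ) : ℝ)) - Pi.single i 1 := by
  funext k
  by_cases h : k = i
  · subst h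
    simp only [Pi.sub_apply, Pi.single_eq_same]
    push_cast
    ring
  · simp only [Pi.sub_apply, Pi.single_apply, if_neg h]
    push_cast
    ring

end Stmt15

/-- discrete harmonicity of the type `C` Weyl dimension polynomial:
`∑_i (H(x+e_i) + H(x-e_i)) = 2d·H(x)` for all `x ∈ ℝ^d`; consequently the kernel
`p⁺` is a stochastic matrix on the dominant weights of `ℤ^d`. -/
theorem stmt_15 (d : ℕ) (hd : 1 ≤ d) :
    (∀ x : Fin d → ℝ,
        ∑ i : Fin d, (HC d (x + Pi.single i 1) + HC d (x - Pi.single i 1))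
          = 2 * (d : ℝ) * HC d x)
    ∧ ∀ lam : Fin d → ℤ, DomC d lam →
        (∀ Lam, 0 ≤ pPlusC d lam Lam) ∧ (∑' Lam : Fin d → ℤ, pPlusC d lam Lam) = 1 := by
  classical
  refine ⟨Stmt15.HC_harm d, fun lam hlam => ?_⟩
  set X : Fin d → ℝ := fun k => ((lam k + ((d : ℤ) - ((k : ℕ) : ℤ)) : ℤ) : ℝ) with hX
  have hH : 0 < HC d X := Stmt15.HC_wt_pos d lam hlam
  have hdpos : (0 : ℝ) < (d : ℝ) := by exact_mod_cast hd
  -- value of the kernel on the `+e_i` neighbours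
  have hplus : ∀ i : Fin d, pPlusC d lam (lam + Pi.single i 1)
      = (1 / (2 * (d : ℝ))) * HC d (X + Pi.single i 1) / HC d X := by
    intro i
    unfold pPlusC
    split_ifs with h
    · rw [Stmt15.cast_wt_add d lam i]
    · have hnd : ¬ DomC d (lam + Pi.single i 1) := fun hc => h ⟨hc, i, Or.inl rfl⟩
      obtain ⟨k, l, hkl, heq⟩ := Stmt15.vanish_plus_pair d lam hlam i hnd
      have hz : HC d (X + Pi.single i 1) = 0 := by
        rw [← Stmt15.cast_wt_add d lam i]
        unfold Stmt15.wt at heq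
        exact Stmt15.HC_zero_of_eq d _ k l hkl (by exact_mod_cast heq)
      rw [hz]
      simp
  have hminus : ∀ i : Fin d, pPlusC d lam (lam - Pi.single i 1)
      = (1 / (2 * (d : ℝ))) * HC d (X - Pi.single i 1) / HC d X := by
    intro i
    unfold pPlusC
    split_ifs with h
    · rw [Stmt15.cast_wt_sub d lam i]
    · have hnd : ¬ DomC d (lam - Pi.single i 1) := fun hc => h ⟨hc, i, Or.inr rfl⟩
      have hz : HC d (X - Pi.single i 1) = 0 := by
        rw [← Stmt15.cast_wt_sub d lam i]
        rcases Stmt15.vanish_minus_cases d lam hlam i hnd with ⟨k, hk⟩ | ⟨k, l, hkl, heq⟩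
        · unfold Stmt15.wt at hk
          exact Stmt15.HC_zero_of_coord d _ k (by exact_mod_cast hk)
        · unfold Stmt15.wt at heq
          exact Stmt15.HC_zero_of_eq d _ k l hkl (by exact_mod_cast heq)
      rw [hz]
      simp
  constructor
  · -- nonnegativity
    intro Lam
    unfold pPlusC
    split_ifs with h
    · obtain ⟨hDom, -⟩ := h
      have hnum : 0 < HC d (fun k => ((Lam k + ((d : ℤ) - ((k : ℕ) : ℤ)) : ℤ) : ℝ)) :=
        Stmt15.HC_wt_pos d Lam hDom
      apply div_nonneg (mul_nonneg (by positivity) hnum.le) hH.le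
    · exact le_refl 0
  · -- the row sums to one
    set f : Fin d × Bool → (Fin d → ℤ) := fun p =>
      if p.2 then lam + Pi.single p.1 1 else lam - Pi.single p.1 1 with hf
    have hsupp : ∀ Lam, Lam ∉ Finset.image f Finset.univ → pPlusC d lam Lam = 0 := by
      intro Lam hLam
      unfold pPlusC
      split_ifs with h
      · exfalso
        obtain ⟨-, i, hi | hi⟩ := h
        · exact hLam (Finset.mem_image.mpr ⟨(i, true), Finset.mem_univ _, hi.symm⟩)
        · exact hLam (Finset.mem_image.mpr ⟨(i, false), Finset.mem_univ _, hi.symm⟩)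
      · rfl
    have hinj : ∀ p ∈ (Finset.univ : Finset (Fin d × Bool)), ∀ q ∈ Finset.univ,
        f p = f q → p = q := by
      rintro ⟨i, b⟩ - ⟨j, c⟩ - h
      cases b <;> cases c <;> simp only [hf, if_true, if_false, Bool.false_eq_true] at h
      · -- both minus
        have hij : i = j := by
          by_contra hne
          have := congrFun h i
          simp [Pi.single_apply, hne] at this
        rw [hij]
      · -- minus = plus
        exfalso
        have := congrFun h j
        by_cases hji : j = i <;> simp [Pi.single_apply, hji] at this <;> omega
      · -- plus = minus
        exfalso
        have := congrFun h i
        by_cases hij : i = j <;> simp [Pi.single_apply, hij] at this <;> omega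
      · -- both plus
        have hij : i = j := by
          by_contra hne
          have := congrFun h i
          simp [Pi.single_apply, hne] at this
        rw [hij]
    rw [tsum_eq_sum hsupp, Finset.sum_image hinj, Fintype.sum_prod_type]
    have hbool : ∀ i : Fin d, ∑ b : Bool, pPlusC d lam (f (i, b))
        = (1 / (2 * (d : ℝ))) * HC d (X + Pi.single i 1) / HC d X
          + (1 / (2 * (d : ℝ))) * HC d (X - Pi.single i 1) / HC d X := by
      intro i
      rw [Fintype.sum_bool]
      show pPlusC d lam (lam + Pi.single i 1) + pPlusC d lam (lam - Pi.single i 1) = _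
      rw [hplus i, hminus i]
    rw [Finset.sum_congr rfl fun i _ => hbool i]
    have step : ∑ i : Fin d,
        ((1 / (2 * (d : ℝ))) * HC d (X + Pi.single i 1) / HC d X
          + (1 / (2 * (d : ℝ))) * HC d (X - Pi.single i 1) / HC d X)
        = (∑ i : Fin d, (HC d (X + Pi.single i 1) + HC d (X - Pi.single i 1)))
            * (1 / (2 * (d : ℝ) * HC d X)) := by
      rw [Finset.sum_mul]
      refine Finset.sum_congr rfl fun i _ => ?_
      ring
    rw [step, Stmt15.HC_harm d X]
    field_simp
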